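/- Let Â, B̂ be in SL(2,ℝ) with tr(Â)·tr(B̂)·tr(ÂB̂) < 0. Regarding Â, B̂ as elements of SL(2,ℂ), set A = Φ*(Â), B = Φ*(B̂) and C = (BA)⁻¹; the traces tr(A), tr(B), tr(C) are real. Then σ₊(A,B,C) = σ₋(A,B,C) = tr(A) + tr(B) + tr(C) + 1 + 2·√((tr(A)+1)(tr(B)+1)(tr(C)+1)), where √ denotes the nonnegative real square root. -/
import Mathlib


open Matrix

/-- The irreducible representation of `SL(2,ℂ)` on `ℂ³` at the level of matrices. -/
noncomputable def PhiStar (M : Matrix (Fin 2) (Fin 2) ℂ) : Matrix (Fin 3) (Fin 3) ℂ :=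
  !![(M 0 0) ^ 2, -(Real.sqrt 2 : ℂ) * M 0 0 * M 0 1, -(M 0 1) ^ 2;
     -(Real.sqrt 2 : ℂ) * M 0 0 * M 1 0, M 0 0 * M 1 1 + M 0 1 * M 1 0,
       (Real.sqrt 2 : ℂ) * M 0 1 * M 1 1;
     -(M 1 0) ^ 2, (Real.sqrt 2 : ℂ) * M 1 0 * M 1 1, (M 1 1) ^ 2]

lemma sqrt2_sq' : (Real.sqrt 2 : ℂ) ^ 2 = 2 := by
  rw [← Complex.ofReal_pow, Real.sq_sqrt (by norm_num : (2:ℝ) ≥ 0)]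
  norm_num

lemma phiStar_mul (M N : Matrix (Fin 2) (Fin 2) ℂ) :
    PhiStar (M * N) = PhiStar M * PhiStar N := by
  ext i j
  fin_cases i <;> fin_cases j <;>
    simp [PhiStar, Matrix.mul_apply, Fin.sum_univ_succ] <;>
    ring_nf <;> simp only [sqrt2_sq'] <;> ring_nf

lemma phiStar_trace (M : Matrix (Fin 2) (Fin 2) ℂ) :
    (PhiStar M).trace = M.trace ^ 2 - M.det := by
  simp [PhiStar, Matrix.trace, Matrix.det_fin_two, Fin.sum_univ_succ, Matrix.trace_fin_two]
  ring

lemma phiStar_one : PhiStar 1 = 1 := by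
  ext i j
  fin_cases i <;> fin_cases j <;>
    simp [PhiStar, Matrix.one_apply, Matrix.vecHead, Matrix.vecTail]

/-- the explicit inverse of a 2×2 matrix of determinant one -/
noncomputable def adj2 (M : Matrix (Fin 2) (Fin 2) ℂ) : Matrix (Fin 2) (Fin 2) ℂ :=
  !![M 1 1, -M 0 1; -M 1 0, M 0 0]

lemma adj2_right_inv (M : Matrix (Fin 2) (Fin 2) ℂ) (h : M.det = 1) :
    M * adj2 M = 1 := by
  rw [adj2]
  obtain ⟨a, b, c, d, rfl⟩ : ∃ a b c d, M = !![a, b; c, d] :=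
    ⟨_, _, _, _, Matrix.eta_fin_two M⟩
  simp [Matrix.det_fin_two] at h
  ext i j
  fin_cases i <;> fin_cases j <;>
    simp [Matrix.mul_apply, Fin.sum_univ_succ, Matrix.one_apply] <;>
    linear_combination (norm := ring_nf) h
  all_goals linear_combination -h

lemma phiStar_inv (M : Matrix (Fin 2) (Fin 2) ℂ) (h : M.det = 1) :
    (PhiStar M)⁻¹ = PhiStar (adj2 M) :=
  Matrix.inv_eq_right_inv (by rw [← phiStar_mul, adj2_right_inv M h, phiStar_one])

lemma adj2_trace (M : Matrix (Fin 2) (Fin 2) ℂ) : (adj2 M).trace = M.trace := by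
  simp [adj2, Matrix.trace_fin_two]
  ring

lemma adj2_det (M : Matrix (Fin 2) (Fin 2) ℂ) : (adj2 M).det = M.det := by
  simp [adj2, Matrix.det_fin_two]
  ring

lemma adj2_mul_trace (M N : Matrix (Fin 2) (Fin 2) ℂ) :
    (adj2 M * N).trace = M.trace * N.trace - (M * N).trace := by
  rw [adj2]
  obtain ⟨a, b, c, d, rfl⟩ : ∃ a b c d, M = !![a, b; c, d] :=
    ⟨_, _, _, _, Matrix.eta_fin_two M⟩
  obtain ⟨e, f, g, h, rfl⟩ : ∃ e f g h, N = !![e, f; g, h] :=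
    ⟨_, _, _, _, Matrix.eta_fin_two N⟩
  simp [Matrix.trace_fin_two, Matrix.mul_apply, Fin.sum_univ_succ]
  ring

lemma map_mul_ofReal (P Q : Matrix (Fin 2) (Fin 2) ℝ) :
    (P * Q).map Complex.ofReal = P.map Complex.ofReal * Q.map Complex.ofReal := by
  ext i j
  simp [Matrix.mul_apply, Matrix.map_apply, Fin.sum_univ_succ]

lemma trace_map_ofReal (P : Matrix (Fin 2) (Fin 2) ℝ) :
    (P.map Complex.ofReal).trace = (P.trace : ℂ) := by
  rw [Matrix.trace_fin_two, Matrix.trace_fin_two]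
  simp [Matrix.map_apply]

lemma det_map_ofReal (P : Matrix (Fin 2) (Fin 2) ℝ) :
    (P.map Complex.ofReal).det = (P.det : ℂ) := by
  rw [Matrix.det_fin_two, Matrix.det_fin_two]
  simp [Matrix.map_apply]

theorem shape_invariant_of_fuchsian_pants
    (Ah Bh : Matrix (Fin 2) (Fin 2) ℝ) (hA : Ah.det = 1) (hB : Bh.det = 1)
    (htr : Ah.trace * Bh.trace * (Ah * Bh).trace < 0) :
    (let A := PhiStar (Ah.map Complex.ofReal);
     let B := PhiStar (Bh.map Complex.ofReal);
     let C := (B * A)⁻¹;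
     let σp := (A⁻¹ * B).trace - (A⁻¹).trace * B.trace;
     let σm := (B⁻¹ * A).trace - (B⁻¹).trace * A.trace;
     A.trace.im = 0 ∧ B.trace.im = 0 ∧ C.trace.im = 0 ∧
     σp = σm ∧
     σp = A.trace + B.trace + C.trace + 1 +
       2 * (Real.sqrt ((A.trace.re + 1) * (B.trace.re + 1) * (C.trace.re + 1)) : ℂ)) := by
  intro A B C σp σm
  set M := Ah.map Complex.ofReal with hM
  set N := Bh.map Complex.ofReal with hN
  set x := Ah.trace with hx
  set y := Bh.trace with hy
  set z := (Ah * Bh).trace with hz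
  have hdM : M.det = 1 := by rw [hM, det_map_ofReal, hA]; norm_num
  have hdN : N.det = 1 := by rw [hN, det_map_ofReal, hB]; norm_num
  have htrM : M.trace = (x : ℂ) := by rw [hM, trace_map_ofReal]
  have htrN : N.trace = (y : ℂ) := by rw [hN, trace_map_ofReal]
  have htrMN : (M * N).trace = (z : ℂ) := by
    rw [hM, hN, ← map_mul_ofReal, trace_map_ofReal]
  have hdNM : (N * M).det = 1 := by rw [Matrix.det_mul, hdN, hdM]; norm_num
  -- traces of A, B, C
  have hAtr : A.trace = ((x ^ 2 - 1 : ℝ) : ℂ) := by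
    rw [show A = PhiStar M from rfl, phiStar_trace, hdM, htrM]; push_cast; ring
  have hBtr : B.trace = ((y ^ 2 - 1 : ℝ) : ℂ) := by
    rw [show B = PhiStar N from rfl, phiStar_trace, hdN, htrN]; push_cast; ring
  have hCdef : C = PhiStar (adj2 (N * M)) := by
    rw [show C = (B * A)⁻¹ from rfl, show B * A = PhiStar (N * M) from (phiStar_mul N M).symm,
      phiStar_inv _ hdNM]
  have hCtr : C.trace = ((z ^ 2 - 1 : ℝ) : ℂ) := by
    rw [hCdef, phiStar_trace, adj2_trace, adj2_det, hdNM, Matrix.trace_mul_comm, htrMN]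
    push_cast; ring
  -- inverses
  have hAinv : A⁻¹ = PhiStar (adj2 M) := phiStar_inv M hdM
  have hBinv : B⁻¹ = PhiStar (adj2 N) := phiStar_inv N hdN
  have hAinvtr : (A⁻¹).trace = ((x ^ 2 - 1 : ℝ) : ℂ) := by
    rw [hAinv, phiStar_trace, adj2_trace, adj2_det, hdM, htrM]; push_cast; ring
  have hBinvtr : (B⁻¹).trace = ((y ^ 2 - 1 : ℝ) : ℂ) := by
    rw [hBinv, phiStar_trace, adj2_trace, adj2_det, hdN, htrN]; push_cast; ring
  have hdadjM : (adj2 M * N).det = 1 := by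
    rw [Matrix.det_mul, adj2_det, hdM, hdN]; norm_num
  have hdadjN : (adj2 N * M).det = 1 := by
    rw [Matrix.det_mul, adj2_det, hdN, hdM]; norm_num
  have hAB : (A⁻¹ * B).trace = ((x * y - z) ^ 2 - 1 : ℝ) := by
    rw [hAinv, show B = PhiStar N from rfl, ← phiStar_mul, phiStar_trace, hdadjM,
      adj2_mul_trace, htrM, htrN, htrMN]
    push_cast; ring
  have hBA : (B⁻¹ * A).trace = ((x * y - z) ^ 2 - 1 : ℝ) := by
    rw [hBinv, show A = PhiStar M from rfl, ← phiStar_mul, phiStar_trace, hdadjN,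
      adj2_mul_trace, htrN, htrM, Matrix.trace_mul_comm, htrMN]
    push_cast; ring
  have hσp : σp = ((x * y - z) ^ 2 - 1 - (x ^ 2 - 1) * (y ^ 2 - 1) : ℝ) := by
    rw [show σp = (A⁻¹ * B).trace - (A⁻¹).trace * B.trace from rfl, hAB, hAinvtr, hBtr]
    push_cast; ring
  have hσm : σm = ((x * y - z) ^ 2 - 1 - (x ^ 2 - 1) * (y ^ 2 - 1) : ℝ) := by
    rw [show σm = (B⁻¹ * A).trace - (B⁻¹).trace * A.trace from rfl, hBA, hBinvtr, hAtr]
    push_cast; ring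
  refine ⟨by rw [hAtr, Complex.ofReal_im], by rw [hBtr, Complex.ofReal_im],
    by rw [hCtr, Complex.ofReal_im], by rw [hσp, hσm], ?_⟩
  rw [hσp, hAtr, hBtr, hCtr]
  have hre : ∀ r : ℝ, ((r : ℂ)).re = r := fun r => Complex.ofReal_re r
  rw [hre, hre, hre]
  have harg : (x ^ 2 - 1 + 1) * (y ^ 2 - 1 + 1) * (z ^ 2 - 1 + 1) = (x * y * z) ^ 2 := by ring
  rw [harg, Real.sqrt_sq_eq_abs, abs_of_neg htr]
  push_cast; ring
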